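/- arXiv:2603.29302 — 3 statements merged into one kernel-verified Lean document; each statement's English description precedes it below -/
import Mathlib

section
/- Let r > 0 with Q0^2 = r^2 + 1 and let z, λ be nonzero complex numbers with z + 1/z = i r(λ + 1/λ) and ζ = λ/z, ζ ≠ 0, i r ζ ≠ 1. If |λ| = 1 then |ζ - i r| = Q0, i.e. ζ lies on the circle of radius Q0 centered at i r. -/
open Complex

/-- If |λ| = 1 then ζ lies on the circle of radius Q0 centered at i r. -/
theorem lambda_unit_circle_maps_to_Sigma (r Q0 : ℝ) (hr : 0 < r)
    (hQ0 : Q0 = Real.sqrt (r ^ 2 + 1)) (z lam : ℂ)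
    (hz : z ≠ 0) (hlam : lam ≠ 0)
    (huni : z + 1 / z = I * r * (lam + 1 / lam))
    (zeta : ℂ) (hzeta : zeta = lam / z)
    (hz1 : zeta ≠ 0) (hz2 : I * r * zeta - 1 ≠ 0)
    (habs : ‖lam‖ = 1) :
    ‖zeta - I * r‖ = Q0 := by
  have hA : z^2*lam + lam = I*r*(lam^2*z + z) := by
    field_simp at huni
    linear_combination huni
  have key : lam ^ 2 * (I * r * zeta - 1) = zeta * (zeta - I * r) := by
    rw [hzeta]
    field_simp
    linear_combination (-1 : ℂ) * hA
  have hl : Complex.normSq lam = 1 := by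
    rw [Complex.normSq_eq_norm_sq, habs]; norm_num
  have h1 : Complex.normSq (I * r * zeta - 1)
      = Complex.normSq zeta * Complex.normSq (zeta - I * r) := by
    have h2 := congrArg Complex.normSq key
    rw [Complex.normSq_mul, map_pow, hl] at h2
    simpa using h2
  have hns : Complex.normSq (zeta - I * r) = r ^ 2 + 1 := by
    simp only [Complex.normSq_apply, Complex.sub_re, Complex.sub_im, Complex.mul_re,
      Complex.mul_im, Complex.I_re, Complex.I_im, Complex.ofReal_re, Complex.ofReal_im,
      Complex.one_re, Complex.one_im] at h1 ⊢
    set x := zeta.re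
    set y := zeta.im
    have hfac : (x^2 + y^2 + 1) * ((x^2 + y^2) - 1 - 2*r*y) = 0 := by
      linear_combination -h1
    have hpos : x^2 + y^2 + 1 > 0 := by positivity
    have h3 : (x^2 + y^2) - 1 - 2*r*y = 0 := by
      rcases mul_eq_zero.mp hfac with h | h
      · exact absurd h (ne_of_gt hpos)
      · exact h
    linear_combination h3
  rw [Complex.norm_def, hns, hQ0]
end

section
/- Let Q± be nonzero complex numbers with |Q+| = |Q-| = Q0, σ = ±1, r^2 = σ Q+ conj(Q-) - 1 real, and z, λ nonzero complex with z + 1/z = i r(λ + 1/λ). Define U± = [[z, Q±],[σ conj(Q∓), 1/z]] and Y± = [[Q±, i r λ - z],[i r λ - z, -σ conj(Q∓)]]. Then U± Y± = Y± · diag(i r λ, i r / λ); that is, the columns of Y± are eigenvectors of U± with eigenvalues i r λ and i r/λ respectively. -/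
open Complex Matrix

lemma aux_eig (r : ℝ) (A B z lam : ℂ) (hz : z ≠ 0) (hlam : lam ≠ 0)
    (hAB : A * B = (r : ℂ) ^ 2 + 1)
    (huni : z + 1 / z = I * r * (lam + 1 / lam)) :
    (!![z, A; B, 1 / z] : Matrix (Fin 2) (Fin 2) ℂ) *
        !![A, I * r * lam - z; I * r * lam - z, -B]
      = !![A, I * r * lam - z; I * r * lam - z, -B] *
        !![I * r * lam, 0; 0, I * r / lam] := by
  have huni' : z ^ 2 * lam + lam = I * r * lam ^ 2 * z + I * r * z := by
    field_simp at huni; linear_combination huni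
  have hI : I ^ 2 = -1 := I_sq
  ext i j
  fin_cases i <;> fin_cases j <;>
    simp [Matrix.mul_apply, Fin.sum_univ_two]
  · ring
  · field_simp; linear_combination -huni' - lam * hAB - (r : ℂ) ^ 2 * lam * hI
  · field_simp; linear_combination z * hAB + (I * (r : ℂ)) * huni' + ((r : ℂ) ^ 2 * z) * hI
  · field_simp; linear_combination -B * huni'

/-- The columns of Y± are eigenvectors of U± with eigenvalues i r λ and i r/λ:
U± Y± = Y± diag(i r λ, i r/λ), for both sign choices. -/
theorem columns_of_Y_are_eigenvectors_of_U (σ : ℂ) (hσ : σ = 1 ∨ σ = -1)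
    (Qp Qm : ℂ) (hQp : Qp ≠ 0) (hQm : Qm ≠ 0) (Q0 r : ℝ) (hr : 0 < r)
    (habsp : ‖Qp‖ = Q0) (habsm : ‖Qm‖ = Q0)
    (hrQ : σ * Qp * (starRingEnd ℂ) Qm - 1 = (r : ℂ) ^ 2)
    (z lam : ℂ) (hz : z ≠ 0) (hlam : lam ≠ 0)
    (huni : z + 1 / z = I * r * (lam + 1 / lam)) :
    (!![z, Qp; σ * (starRingEnd ℂ) Qm, 1 / z] : Matrix (Fin 2) (Fin 2) ℂ) *
        !![Qp, I * r * lam - z; I * r * lam - z, -(σ * (starRingEnd ℂ) Qm)]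
      = !![Qp, I * r * lam - z; I * r * lam - z, -(σ * (starRingEnd ℂ) Qm)] *
        !![I * r * lam, 0; 0, I * r / lam] ∧
    (!![z, Qm; σ * (starRingEnd ℂ) Qp, 1 / z] : Matrix (Fin 2) (Fin 2) ℂ) *
        !![Qm, I * r * lam - z; I * r * lam - z, -(σ * (starRingEnd ℂ) Qp)]
      = !![Qm, I * r * lam - z; I * r * lam - z, -(σ * (starRingEnd ℂ) Qp)] *
        !![I * r * lam, 0; 0, I * r / lam] := by
  have h2 : σ * Qm * (starRingEnd ℂ) Qp - 1 = (r : ℂ) ^ 2 := by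
    have hc := congrArg (starRingEnd ℂ) hrQ
    simp only [map_sub, _root_.map_mul, _root_.map_one, map_pow, Complex.conj_ofReal,
      Complex.conj_conj] at hc
    rcases hσ with h | h <;> subst h <;> simp at hc <;> linear_combination hc
  constructor
  · exact aux_eig r Qp (σ * (starRingEnd ℂ) Qm) z lam hz hlam
      (by linear_combination hrQ) huni
  · exact aux_eig r Qm (σ * (starRingEnd ℂ) Qp) z lam hz hlam
      (by linear_combination h2) huni
end

section
/- Let V± and Y± be as above with z + 1/z = i r(λ + 1/λ). Then V± Y± = Y± · diag(r λ (z - 1/z), (r/λ)(z - 1/z)); i.e. the columns of Y± are eigenvectors of V± with eigenvalues r λ (z - 1/z) and (r/λ)(z - 1/z). -/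
open Complex Matrix

lemma aux (r σ Q Qc z lam : ℂ) (hz : z ≠ 0) (hlam : lam ≠ 0)
    (hQS : Q * (σ * Qc) = r ^ 2 + 1)
    (huni : z + 1 / z = I * r * (lam + 1 / lam)) :
    (!![I - I * z ^ 2, -(I * Q * (z - 1 / z));
        -(I * σ * Qc * (z - 1 / z)), -I + I / z ^ 2] :
          Matrix (Fin 2) (Fin 2) ℂ) *
        !![Q, I * r * lam - z; I * r * lam - z, -(σ * Qc)]
      = !![Q, I * r * lam - z; I * r * lam - z, -(σ * Qc)] *
        !![r * lam * (z - 1 / z), 0; 0, (r / lam) * (z - 1 / z)] := by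
  have huni' : z ^ 2 * lam + lam = I * r * (lam ^ 2 + 1) * z := by
    field_simp at huni
    linear_combination huni
  ext i j
  fin_cases i <;> fin_cases j <;>
    simp [Matrix.mul_apply, Fin.sum_univ_succ] <;>
    field_simp
  · linear_combination (-(Q * r * lam * (z ^ 2 - 1))) * Complex.I_sq
  · linear_combination I * (z ^ 2 - 1) * huni' + r * z * (z ^ 2 - 1) * Complex.I_sq
      + I * lam * (z ^ 2 - 1) * hQS
  · linear_combination r * (z ^ 2 - 1) * huni'
      - r * lam * (z ^ 2 - 1) * Complex.I_sq - I * z * (z ^ 2 - 1) * hQS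
  · linear_combination I * (σ * Qc) * (z ^ 2 - 1) * huni'
      + (σ * Qc) * r * z * (z ^ 2 - 1) * Complex.I_sq

/-- The columns of Y± are eigenvectors of V± with eigenvalues
r λ (z - 1/z) and (r/λ)(z - 1/z): V± Y± = Y± diag(r λ (z-1/z), (r/λ)(z-1/z)). -/
theorem columns_of_Y_are_eigenvectors_of_V (σ : ℂ) (hσ : σ = 1 ∨ σ = -1)
    (Qp Qm : ℂ) (Q0 r : ℝ) (hr : 0 < r) (hQ0 : Q0 ^ 2 = r ^ 2 + 1)
    (hrel : σ * Qp * (starRingEnd ℂ) Qm = (Q0 : ℂ) ^ 2)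
    (z lam : ℂ) (hz : z ≠ 0) (hlam : lam ≠ 0)
    (huni : z + 1 / z = I * r * (lam + 1 / lam)) :
    (!![I - I * z ^ 2, -(I * Qp * (z - 1 / z));
        -(I * σ * (starRingEnd ℂ) Qm * (z - 1 / z)), -I + I / z ^ 2] :
          Matrix (Fin 2) (Fin 2) ℂ) *
        !![Qp, I * r * lam - z; I * r * lam - z, -(σ * (starRingEnd ℂ) Qm)]
      = !![Qp, I * r * lam - z; I * r * lam - z, -(σ * (starRingEnd ℂ) Qm)] *
        !![r * lam * (z - 1 / z), 0; 0, (r / lam) * (z - 1 / z)] ∧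
    (!![I - I * z ^ 2, -(I * Qm * (z - 1 / z));
        -(I * σ * (starRingEnd ℂ) Qp * (z - 1 / z)), -I + I / z ^ 2] :
          Matrix (Fin 2) (Fin 2) ℂ) *
        !![Qm, I * r * lam - z; I * r * lam - z, -(σ * (starRingEnd ℂ) Qp)]
      = !![Qm, I * r * lam - z; I * r * lam - z, -(σ * (starRingEnd ℂ) Qp)] *
        !![r * lam * (z - 1 / z), 0; 0, (r / lam) * (z - 1 / z)] := by
  have hQ0' : (Q0 : ℂ) ^ 2 = (r : ℂ) ^ 2 + 1 := by exact_mod_cast congrArg (Complex.ofReal ·) hQ0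
  have key1 : Qp * (σ * (starRingEnd ℂ) Qm) = (r : ℂ) ^ 2 + 1 := by
    rw [← hQ0', ← hrel]; ring
  have hσc : (starRingEnd ℂ) σ = σ := by rcases hσ with h | h <;> simp [h]
  have key2 : Qm * (σ * (starRingEnd ℂ) Qp) = (r : ℂ) ^ 2 + 1 := by
    have := congrArg (starRingEnd ℂ) hrel
    simp only [_root_.map_mul, map_pow, hσc, Complex.conj_conj, Complex.conj_ofReal] at this
    rw [← hQ0', ← this]; ring
  exact ⟨aux (r : ℂ) σ Qp ((starRingEnd ℂ) Qm) z lam hz hlam key1 huni,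
    aux (r : ℂ) σ Qm ((starRingEnd ℂ) Qp) z lam hz hlam key2 huni⟩
end
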